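/- If f (p,q)-interlaces g with p, q ≥ 1, then there exists a monic real-rooted polynomial h of the same degree as f such that both f (p,0)-interlaces h and g (q,0)-interlaces h. -/

import Mathlib

open Polynomial in
/-- The `i`-th element (1-indexed) of a list, as an `EReal`, with the convention
that it is `+∞` for `i < 1` and `-∞` past the end of the list. -/
noncomputable def seqOf (L : List ℝ) (i : ℤ) : EReal :=
  if i < 1 then ⊤ else (L[(i - 1).toNat]?).elim ⊥ (fun x => (x : EReal))

open Polynomial in
/-- `rSeq f i` is the `i`-th root of `f`, roots listed in non-increasing order,
with `r_i = +∞` for `i < 1` and `r_i = -∞` for `i` beyond the number of roots. -/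
noncomputable def rSeq (f : Polynomial ℝ) (i : ℤ) : EReal :=
  seqOf (f.roots.sort (· ≥ ·)) i

open Polynomial in
/-- `f` `(p,q)`-interlaces `g` : `r_{i+p}(g) ≤ r_i(f) ≤ r_{i-q}(g)` for all `i`. -/
def PQInt (p q : ℕ) (f g : Polynomial ℝ) : Prop :=
  ∀ i : ℤ, rSeq g (i + p) ≤ rSeq f i ∧ rSeq f i ≤ rSeq g (i - q)

open Polynomial in
/-- `f` is real-rooted with positive leading coefficient. -/
def RR (f : Polynomial ℝ) : Prop :=
  0 < f.leadingCoeff ∧ f.roots.card = f.natDegree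

open Polynomial in
/-- number of roots of `f` (with multiplicity) in `[r, ∞)`. -/
noncomputable def nRoots (f : Polynomial ℝ) (r : ℝ) : ℕ :=
  (f.roots.filter (fun x => r ≤ x)).card

/-- `i`-th largest eigenvalue of a Hermitian matrix, as an `EReal`,
with conventions `λ_i = +∞` for `i < 1` and `λ_i = -∞` for `i > n`. -/
noncomputable def eigSeq {m : Type*} [Fintype m] [DecidableEq m]
    {M : Matrix m m ℂ} (hM : M.IsHermitian) (i : ℤ) : EReal :=
  seqOf ((Finset.univ.val.map hM.eigenvalues).sort (· ≥ ·)) i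

/-- positive index of inertia: number of positive eigenvalues. -/
noncomputable def posIdx {m : Type*} [Fintype m] [DecidableEq m]
    {M : Matrix m m ℂ} (hM : M.IsHermitian) : ℕ :=
  (Finset.univ.filter (fun i => 0 < hM.eigenvalues i)).card

/-- negative index of inertia: number of negative eigenvalues. -/
noncomputable def negIdx {m : Type*} [Fintype m] [DecidableEq m]
    {M : Matrix m m ℂ} (hM : M.IsHermitian) : ℕ :=
  (Finset.univ.filter (fun i => hM.eigenvalues i < 0)).card

/-- characteristic polynomial of `M` equals the real polynomial `f` (coerced to `ℂ`). -/
def HasCharpoly {m : Type*} [Fintype m] [DecidableEq m]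
    (M : Matrix m m ℂ) (f : Polynomial ℝ) : Prop :=
  M.charpoly = f.map (algebraMap ℝ ℂ)

lemma seqOf_lt_one (L : List ℝ) {i : ℤ} (h : i < 1) : seqOf L i = ⊤ := by
  simp [seqOf, h]

lemma seqOf_of_lt (L : List ℝ) {i : ℤ} (h1 : 1 ≤ i) (h2 : (i - 1).toNat < L.length) :
    seqOf L i = (L.get ⟨(i - 1).toNat, h2⟩ : ℝ) := by
  have h2' : i.toNat - 1 < L.length := by omega
  have : ((i:ℤ) - 1).toNat = i.toNat - 1 := by omega
  simp [seqOf, not_lt.mpr h1, List.getElem?_eq_getElem h2', List.get_eq_getElem, this]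

lemma seqOf_of_ge (L : List ℝ) {i : ℤ} (h1 : 1 ≤ i) (h2 : L.length ≤ (i - 1).toNat) :
    seqOf L i = ⊥ := by
  have h2' : L.length ≤ i.toNat - 1 := by omega
  simp [seqOf, not_lt.mpr h1, List.getElem?_eq_none h2']

lemma seqOf_anti {L : List ℝ} (hL : L.Pairwise (· ≥ ·)) : Antitone (seqOf L) := by
  intro i j hij
  by_cases hi : i < 1
  · rw [seqOf_lt_one L hi]; exact le_top
  push_neg at hi
  have hj : 1 ≤ j := le_trans hi hij
  by_cases hjl : (j - 1).toNat < L.length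
  · have hil : (i - 1).toNat < L.length :=
      lt_of_le_of_lt (by omega) hjl
    rw [seqOf_of_lt L hi hil, seqOf_of_lt L hj hjl]
    have : L.get ⟨(j-1).toNat, hjl⟩ ≤ L.get ⟨(i-1).toNat, hil⟩ := by
      rcases eq_or_lt_of_le (show (i-1).toNat ≤ (j-1).toNat by omega) with h | h
      · simp [Fin.ext_iff, h, le_refl]
      · exact hL.rel_get_of_lt h
    exact_mod_cast this
  · rw [seqOf_of_ge L hj (le_of_not_gt hjl)]; exact bot_le

lemma seqOf_zipWith_max (L M : List ℝ) (hlen : L.length = M.length) (i : ℤ) :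
    seqOf (List.zipWith max L M) i = max (seqOf L i) (seqOf M i) := by
  have hz : (List.zipWith max L M).length = L.length := by
    rw [List.length_zipWith, hlen, min_self]
  by_cases hi : i < 1
  · simp [seqOf_lt_one _ hi]
  push_neg at hi
  by_cases hk : (i - 1).toNat < L.length
  · rw [seqOf_of_lt L hi hk, seqOf_of_lt M hi (hlen ▸ hk), seqOf_of_lt _ hi (hz ▸ hk)]
    have := List.getElem_zipWith (f := max) (l := L) (l' := M)
      (i := (i - 1).toNat) (h := hz ▸ hk)
    simp only [List.get_eq_getElem, this]
    exact ((EReal.coe_strictMono.monotone).map_max)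
  · push_neg at hk
    rw [seqOf_of_ge L hi hk, seqOf_of_ge M hi (hlen ▸ hk), seqOf_of_ge _ hi (hz ▸ hk)]
    simp

lemma sorted_zipWith_max {L M : List ℝ} (hL : L.Pairwise (· ≥ ·)) (hM : M.Pairwise (· ≥ ·)) :
    (List.zipWith max L M).Pairwise (· ≥ ·) := by
  rw [List.pairwise_iff_get]
  intro a b hab
  have ha : (a : ℕ) < L.length := lt_of_lt_of_le a.2 (by simp [List.length_zipWith])
  have hb : (b : ℕ) < L.length := lt_of_lt_of_le b.2 (by simp [List.length_zipWith])
  have ha' : (a : ℕ) < M.length := lt_of_lt_of_le a.2 (by simp [List.length_zipWith])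
  have hb' : (b : ℕ) < M.length := lt_of_lt_of_le b.2 (by simp [List.length_zipWith])
  have h1 : L[(b:ℕ)] ≤ L[(a:ℕ)] := hL.rel_get_of_lt (a := ⟨a, ha⟩) (b := ⟨b, hb⟩) hab
  have h2 : M[(b:ℕ)] ≤ M[(a:ℕ)] := hM.rel_get_of_lt (a := ⟨a, ha'⟩) (b := ⟨b, hb'⟩) hab
  simp only [List.get_eq_getElem, List.getElem_zipWith]
  exact max_le_max h1 h2


open Polynomial in
theorem stmt17 (f g : Polynomial ℝ) (hfm : f.Monic) (hgm : g.Monic)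
    (hf : f.roots.card = f.natDegree) (hg : g.roots.card = g.natDegree)
    (hdeg : f.natDegree = g.natDegree) (p q : ℕ) (hp : 1 ≤ p) (hq : 1 ≤ q)
    (hint : PQInt p q f g) :
    ∃ h : Polynomial ℝ, h.Monic ∧ h.roots.card = h.natDegree ∧
      h.natDegree = f.natDegree ∧ PQInt p 0 f h ∧ PQInt q 0 g h := by
  have hint' : ∀ i : ℤ, rSeq g (i + p) ≤ rSeq f i ∧ rSeq f i ≤ rSeq g (i - q) := hint
  clear hint
  rename' hint' => hint
  set Lf := f.roots.sort (· ≥ ·) with hLf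
  set Lg := g.roots.sort (· ≥ ·) with hLg
  have hLfs : Lf.Pairwise (· ≥ ·) := f.roots.pairwise_sort _
  have hLgs : Lg.Pairwise (· ≥ ·) := g.roots.pairwise_sort _
  have hlenf : Lf.length = f.natDegree := by rw [hLf, Multiset.length_sort, hf]
  have hleng : Lg.length = g.natDegree := by rw [hLg, Multiset.length_sort, hg]
  have hlen : Lf.length = Lg.length := by rw [hlenf, hleng, hdeg]
  set H := List.zipWith max Lf Lg with hH
  refine ⟨(Multiset.map (fun a => Polynomial.X - Polynomial.C a) (↑H)).prod, ?_, ?_, ?_, ?_, ?_⟩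
  case' refine_4 => skip
  all_goals {
    have hmonic : ((Multiset.map (fun a => Polynomial.X - Polynomial.C a) (↑H : Multiset ℝ)).prod).Monic :=
      Polynomial.monic_multiset_prod_of_monic _ _ fun a _ => Polynomial.monic_X_sub_C a
    have hroots : ((Multiset.map (fun a => Polynomial.X - Polynomial.C a) (↑H : Multiset ℝ)).prod).roots = ↑H :=
      Polynomial.roots_multiset_prod_X_sub_C _
    have hnd : ((Multiset.map (fun a => Polynomial.X - Polynomial.C a) (↑H : Multiset ℝ)).prod).natDegree = f.natDegree := by
      rw [Polynomial.natDegree_multiset_prod_X_sub_C_eq_card]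
      simp only [Multiset.coe_card]
      rw [hH, List.length_zipWith, hlen, min_self, ← hlen, hlenf]
    have hHs : H.Pairwise (· ≥ ·) := sorted_zipWith_max hLfs hLgs
    have hsort : (((Multiset.map (fun a => Polynomial.X - Polynomial.C a) (↑H : Multiset ℝ)).prod).roots).sort (· ≥ ·) = H := by
      rw [hroots]
      refine List.Perm.eq_of_pairwise' (Multiset.pairwise_sort _ _) hHs ?_
      exact Multiset.coe_eq_coe.mp (Multiset.sort_eq _ _)
    have hrh : ∀ i : ℤ, rSeq ((Multiset.map (fun a => Polynomial.X - Polynomial.C a) (↑H : Multiset ℝ)).prod) i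
        = max (seqOf Lf i) (seqOf Lg i) := by
      intro i
      rw [rSeq, hsort, hH, seqOf_zipWith_max _ _ hlen]
    first
    | exact hmonic
    | (rw [hroots, hnd]; simp only [Multiset.coe_card]; rw [hH, List.length_zipWith, hlen, min_self, ← hlen, hlenf])
    | exact hnd
    | { intro i
        constructor
        · rw [hrh]
          refine max_le ?_ ((hint i).1)
          have : rSeq f i = seqOf Lf i := rfl
          rw [this]
          exact seqOf_anti hLfs (by omega : i ≤ i + p)
        · rw [hrh]
          simp only [Nat.cast_zero, sub_zero]
          exact le_max_left _ _ }
    | { intro i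
        constructor
        · rw [hrh]
          refine max_le ?_ ?_
          · have h2 : seqOf Lf (i + q) ≤ rSeq g (i + q - q) := (hint (i + q)).2
            simpa using h2
          · exact seqOf_anti hLgs (by omega : i ≤ i + q)
        · rw [hrh]
          simp only [Nat.cast_zero, sub_zero]
          exact le_max_right _ _ }
  }
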